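/- Let Z be an n-dimensional naturally graded p-filiform complex Zinbiel algebra of first type (with the adapted basis normalized as in the preceding structure results), and let γ_{ij} ∈ ℂ be the scalars defined by f_i ∘ f_j = γ_{ij} e_2 for 1 ≤ i, j ≤ s_1. Then f_{s_1+⋯+s_t+i} ∘ f_{s_1+⋯+s_k+j} = γ_{ij} (t+k+1)! e_{t+k+2} for all 0 ≤ k+t ≤ n−p−2, 1 ≤ i ≤ s_{t+2} and 1 ≤ j ≤ s_{k+2}. -/

import Mathlib

open Module Submodule

/-- The Zinbiel identity for a bilinear operation `mul` on a complex vector space: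
`(x∘y)∘z = x∘(y∘z) + x∘(z∘y)`. -/
def IsZinbiel {Z : Type*} [AddCommGroup Z] [Module ℂ Z] (mul : Z →ₗ[ℂ] Z →ₗ[ℂ] Z) : Prop :=
  ∀ x y z : Z, mul (mul x y) z = mul x (mul y z) + mul x (mul z y)
/-- The square `Z ∘ Z` of the algebra. -/
def algSq {Z : Type*} [AddCommGroup Z] [Module ℂ Z] (mul : Z →ₗ[ℂ] Z →ₗ[ℂ] Z) :
    Submodule ℂ Z :=
  Submodule.span ℂ {z | ∃ x y, z = mul x y}
/-- `C(Z) = (n-p, 1, …, 1)` (`p`-filiformity) expressed via the left multiplication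
operators: for every `x ∉ Z²` the nilpotent operator `L_x` satisfies `L_x^(n-p) = 0`
and has rank at most `n-p-1`; this says exactly that the Jordan type of every `L_x`
is lexicographically at most `(n-p, 1, …, 1)`. -/
def CharSeqMax {Z : Type*} [AddCommGroup Z] [Module ℂ Z]
    (mul : Z →ₗ[ℂ] Z →ₗ[ℂ] Z) (n p : ℕ) : Prop :=
  ∀ x : Z, x ∉ algSq mul →
    ((mul x : Module.End ℂ Z) ^ (n - p) = 0) ∧
      Module.finrank ℂ (LinearMap.range (mul x)) ≤ n - p - 1
/-- The adapted family `e_1, …, e_m, f_1, …, f_p` indexed by `Fin m ⊕ Fin p`. -/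
def adaptedFam {Z : Type*} (m p : ℕ) (e f : ℕ → Z) : Fin m ⊕ Fin p → Z :=
  Sum.elim (fun i => e ((i : ℕ) + 1)) (fun j => f ((j : ℕ) + 1))
/-- `psum s k = s 1 + s 2 + ⋯ + s k`. -/
def psum (s : ℕ → ℕ) (k : ℕ) : ℕ := ∑ j ∈ Finset.Icc 1 k, s j

/-- Lemma (`lema2`): in the normalized adapted basis, with `f_i ∘ f_j = γ_{ij} e_2` for
`1 ≤ i, j ≤ s_1`, one has
`f_{s_1+⋯+s_t+i} ∘ f_{s_1+⋯+s_k+j} = γ_{ij} (t+k+1)! e_{t+k+2}` for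
`0 ≤ k + t ≤ n-p-2`, `1 ≤ i ≤ s_{t+2}` and `1 ≤ j ≤ s_{k+2}`. -/
theorem graded_p_filiform_ff_general
    {Z : Type*} [AddCommGroup Z] [Module ℂ Z]
    (mul : Z →ₗ[ℂ] Z →ₗ[ℂ] Z) (hzin : IsZinbiel mul)
    (n p : ℕ) (hpn : p < n)
    (e f : ℕ → Z)
    -- `{e_1, …, e_{n-p}, f_1, …, f_p}` is a basis of the `n`-dimensional algebra `Z`
    (hli : LinearIndependent ℂ (adaptedFam (n - p) p e f))
    (hsp : Submodule.span ℂ (Set.range (adaptedFam (n - p) p e f)) = ⊤)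
    -- the basis is adapted of first type: `e_1 ∘ e_i = e_{i+1}`, `e_1 ∘ e_{n-p} = 0`,
    -- `e_1 ∘ f_j = 0`
    (hee : ∀ i, 1 ≤ i → i ≤ n - p - 1 → mul (e 1) (e i) = e (i + 1))
    (hetop : mul (e 1) (e (n - p)) = 0)
    (hef : ∀ j, 1 ≤ j → j ≤ p → mul (e 1) (f j) = 0)
    -- the natural gradation `Z = Z_1 ⊕ ⋯ ⊕ Z_{n-p}` : `W i` is the `i`-th component,
    -- the gradation is multiplicative and generated in degree one
    -- (`Z_{i+1} = Z_1 ∘ Z_i`, coming from `Z_i = Z^i/Z^{i+1}`), and `e_i ∈ Z_i`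
    (W : ℕ → Submodule ℂ Z)
    (hW0 : W 0 = ⊥)
    (hWhigh : ∀ i, n - p < i → W i = ⊥)
    (hWint : DirectSum.IsInternal W)
    (hWmul : ∀ i j, ∀ x ∈ W i, ∀ y ∈ W j, mul x y ∈ W (i + j))
    (hWgen : ∀ i, 1 ≤ i → W (i + 1) = Submodule.span ℂ {z | ∃ x ∈ W 1, ∃ y ∈ W i, z = mul x y})
    (heW : ∀ i, 1 ≤ i → i ≤ n - p → e i ∈ W i)
    -- `Z` is `p`-filiform with characteristic vector `e_1 ∉ Z²`
    (hfil : CharSeqMax mul n p)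
    (he1sq : e 1 ∉ algSq mul)
    -- `s_i = dim Z_i - 1` and
    -- `Z_i = ⟨e_i, f_{s_1+⋯+s_{i-1}+1}, …, f_{s_1+⋯+s_i}⟩` for `1 ≤ i ≤ n-p`
    (s : ℕ → ℕ) (hs0 : s 0 = 0) (hshigh : ∀ i, n - p < i → s i = 0)
    (hsum : psum s (n - p) = p)
    (hWspan : ∀ i, 1 ≤ i → i ≤ n - p →
      W i = Submodule.span ℂ (insert (e i) (f '' Set.Icc (psum s (i - 1) + 1) (psum s i))))
    -- the basis is normalized so that `f_{s_1+⋯+s_{t-1}+i} ∘ e_1 = f_{s_1+⋯+s_t+i}`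
    -- for `1 ≤ i ≤ s_{t+1}` and `= 0` for `s_{t+1}+1 ≤ i ≤ s_t`
    (hnorm : ∀ t i, 1 ≤ t → t ≤ n - p - 1 →
      (1 ≤ i → i ≤ s (t + 1) → mul (f (psum s (t - 1) + i)) (e 1) = f (psum s t + i)) ∧
      (s (t + 1) + 1 ≤ i → i ≤ s t → mul (f (psum s (t - 1) + i)) (e 1) = 0))
    -- the scalars `γ_{ij}` with `f_i ∘ f_j = γ_{ij} e_2 = -f_j ∘ f_i` for `1 ≤ i, j ≤ s_1`
    (γ : ℕ → ℕ → ℂ)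
    (hγ : ∀ i j, 1 ≤ i → i ≤ s 1 → 1 ≤ j → j ≤ s 1 → mul (f i) (f j) = γ i j • e 2)
    (hγanti : ∀ i j, 1 ≤ i → i ≤ s 1 → 1 ≤ j → j ≤ s 1 → γ i j = -γ j i)
    :
    ∀ t k i j, t + k ≤ n - p - 2 → 1 ≤ i → i ≤ s (t + 2) → 1 ≤ j → j ≤ s (k + 2) →
      mul (f (psum s t + i)) (f (psum s k + j)) =
        (γ i j * (((t + k + 1).factorial : ℕ) : ℂ)) • e (t + k + 2) := by
  -- basic facts about `psum`
  have hp0 : psum s 0 = 0 := by simp [psum]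
  have hpsucc : ∀ q : ℕ, psum s (q + 1) = psum s q + s (q + 1) := by
    intro q
    exact Finset.sum_Icc_succ_top (by omega) s
  have hpmono : ∀ a b : ℕ, a ≤ b → psum s a ≤ psum s b := by
    intro a b hab
    exact Finset.sum_le_sum_of_subset (Finset.Icc_subset_Icc_right hab)
  -- nonvanishing of the `f`'s
  have hfne : ∀ b, 1 ≤ b → b ≤ p → f b ≠ 0 := by
    intro b hb1 hbp
    have h := hli.ne_zero (Sum.inr ⟨b - 1, by omega⟩)
    simpa [adaptedFam, Nat.sub_add_cancel hb1] using h
  -- disjointness of distinct graded components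
  have hdisj : ∀ a b : ℕ, a ≠ b → ∀ x : Z, x ∈ W a → x ∈ W b → x = 0 := by
    intro a b hab x hxa hxb
    exact Submodule.disjoint_def.mp
      (hWint.submodule_iSupIndep.pairwiseDisjoint hab) x hxa hxb
  have he1W : e 1 ∈ W 1 := heW 1 le_rfl (by omega)
  -- membership of the `f`'s in the graded pieces
  have hfW : ∀ q b, q + 1 ≤ n - p → psum s q + 1 ≤ b → b ≤ psum s (q + 1) →
      f b ∈ W (q + 1) := by
    intro q b hq hb1 hb2
    rw [hWspan (q + 1) (by omega) hq]
    refine Submodule.subset_span (Set.mem_insert_of_mem _ ⟨b, ⟨?_, hb2⟩, rfl⟩)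
    simpa using hb1
  -- monotonicity of the dimensions `s`
  have hmono : ∀ q, 1 ≤ q → q + 1 ≤ n - p → s (q + 1) ≤ s q := by
    intro q hq1 hq2
    by_contra hlt
    push_neg at hlt
    obtain ⟨q', rfl⟩ : ∃ q', q = q' + 1 := ⟨q - 1, by omega⟩
    have h1 := (hnorm (q' + 1) (s (q' + 1) + 1) (by omega) (by omega)).1
      (by omega) (by omega)
    simp only [Nat.add_sub_cancel] at h1
    have hps := hpsucc q'
    have hps2 := hpsucc (q' + 1)
    have hmemL : f (psum s q' + (s (q' + 1) + 1)) ∈ W (q' + 1 + 1) :=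
      hfW (q' + 1) _ hq2 (by omega) (by omega)
    have hmem3 : f (psum s (q' + 1) + (s (q' + 1) + 1)) ∈ W (q' + 1 + 1 + 1) := by
      rw [← h1]
      exact hWmul (q' + 1 + 1) 1 _ hmemL _ he1W
    have hmemR : f (psum s (q' + 1) + (s (q' + 1) + 1)) ∈ W (q' + 1 + 1) :=
      hfW (q' + 1) _ hq2 (by omega) (by omega)
    have h0 : f (psum s (q' + 1) + (s (q' + 1) + 1)) = 0 :=
      hdisj _ _ (by omega) _ hmemR hmem3
    have hle : psum s (q' + 1 + 1) ≤ psum s (n - p) := hpmono _ _ (by omega)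
    exact hfne _ (by omega) (by omega) h0
  -- `e_q ∘ e_1 = q • e_{q+1}`
  have heE1 : ∀ q, 1 ≤ q → q ≤ n - p - 1 → mul (e q) (e 1) = (q : ℂ) • e (q + 1) := by
    intro q
    induction q with
    | zero => omega
    | succ q ihq =>
      intro _ hq
      rcases Nat.eq_zero_or_pos q with h0 | hpos
      · subst h0
        rw [hee 1 le_rfl (by omega)]
        norm_num
      · have hq' : q ≤ n - p - 1 := by omega
        rw [← hee q hpos hq', hzin (e 1) (e q) (e 1), ihq hpos hq', map_smul,
          hee q hpos hq', hee (q + 1) (by omega) hq]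
        push_cast
        rw [add_smul, one_smul]
  -- the main induction on `t + k`
  have main : ∀ N t k i j, t + k = N → t + k ≤ n - p - 2 → 1 ≤ i → i ≤ s (t + 2) →
      1 ≤ j → j ≤ s (k + 2) →
      mul (f (psum s t + i)) (f (psum s k + j)) =
        (γ i j * (((t + k + 1).factorial : ℕ) : ℂ)) • e (t + k + 2) := by
    intro N
    induction N with
    | zero =>
      intro t k i j hN htk hi1 hi2 hj1 hj2
      obtain ⟨rfl, rfl⟩ : t = 0 ∧ k = 0 := by omega
      simp only [zero_add] at hi2 hj2
      have hnp2 : 2 ≤ n - p := by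
        by_contra h
        have := hshigh 2 (by omega)
        omega
      have hs21 : s 2 ≤ s 1 := hmono 1 le_rfl (by omega)
      have hi2' : i ≤ s 1 := by omega
      have hj2' : j ≤ s 1 := by omega
      rw [hp0, zero_add, zero_add, hγ i j hi1 hi2' hj1 hj2']
      norm_num [Nat.factorial]
    | succ N ih =>
      intro t k i j hN htk hi1 hi2 hj1 hj2
      have ht2 : t + 2 ≤ n - p := by
        by_contra h
        have := hshigh (t + 2) (by omega)
        omega
      have hk2 : k + 2 ≤ n - p := by
        by_contra h
        have := hshigh (k + 2) (by omega)
        omega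
      rcases k with _ | k'
      · -- k = 0, t = t' + 1
        obtain ⟨t', rfl⟩ : ∃ t', t = t' + 1 := ⟨N, by omega⟩
        have hi2' : i ≤ s (t' + 2) := by
          have h := hmono (t' + 2) (by omega) (by omega)
          rw [show t' + 1 + 2 = t' + 2 + 1 by omega] at hi2
          omega
        have htnorm := (hnorm (t' + 1) i (by omega) (by omega)).1 hi1 hi2'
        simp only [Nat.add_sub_cancel] at htnorm
        have hnp2 : 2 ≤ n - p := by omega
        have hs21 : s 2 ≤ s 1 := hmono 1 le_rfl (by omega)
        have hj2' : j ≤ s 2 := by simp only [zero_add] at hj2; omega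
        have hp1 : psum s 1 = s 1 := by simp [psum]
        have hjp : j ≤ p := by
          have := hpmono 1 (n - p) (by omega)
          omega
        have hzero1 : mul (e 1) (f j) = 0 := hef j hj1 hjp
        have h1norm := (hnorm 1 j (by omega) (by omega)).1 hj1 hj2'
        norm_num [hp0] at h1norm
        -- h1norm : mul (f j) (e 1) = f (psum s 1 + j)
        have hIH := ih t' 0 i j (by omega) (by omega) hi1 hi2' hj1 hj2
        rw [hp0, zero_add] at hIH
        simp only [Nat.add_zero] at hIH
        have hstep : mul (f (psum s (t' + 1) + i)) (f (psum s 0 + j)) =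
            mul (mul (f (psum s t' + i)) (f j)) (e 1) := by
          rw [hp0, zero_add, ← htnorm, hzin (f (psum s t' + i)) (e 1) (f j),
            hzero1, map_zero, zero_add, h1norm,
            hzin (f (psum s t' + i)) (f j) (e 1), h1norm, hzero1, map_zero, add_zero]
        rw [hstep, hIH, map_smul, LinearMap.smul_apply,
          heE1 (t' + 2) (by omega) (by omega), smul_smul,
          show t' + 1 + 0 + 2 = t' + 2 + 1 by omega,
          show t' + 1 + 0 + 1 = t' + 1 + 1 by omega]
        have hfac : (((t' + 1 + 1).factorial : ℕ) : ℂ) =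
            ((t' + 2 : ℕ) : ℂ) * (((t' + 1).factorial : ℕ) : ℂ) := by
          rw [Nat.factorial_succ]
          push_cast
          ring
        congr 1
        rw [hfac]
        ring
      · -- k = k' + 1
        have hj2' : j ≤ s (k' + 2) := by
          have h := hmono (k' + 2) (by omega) (by omega)
          rw [show k' + 1 + 2 = k' + 2 + 1 by omega] at hj2
          omega
        have hknorm := (hnorm (k' + 1) j (by omega) (by omega)).1 hj1 hj2'
        simp only [Nat.add_sub_cancel] at hknorm
        have hzero : mul (e 1) (f (psum s k' + j)) = 0 := by
          apply hef _ (by omega)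
          have h1 := hpsucc k'
          have h2 := hpmono (k' + 1) (n - p) (by omega)
          have h3 : j ≤ s (k' + 1) := le_trans hj2' (hmono (k' + 1) (by omega) (by omega))
          omega
        have hIH := ih t k' i j (by omega) (by omega) hi1 hi2 hj1 hj2'
        have hstep : mul (f (psum s t + i)) (f (psum s (k' + 1) + j)) =
            mul (mul (f (psum s t + i)) (f (psum s k' + j))) (e 1) := by
          rw [hzin (f (psum s t + i)) (f (psum s k' + j)) (e 1), hknorm,
            hzero, map_zero, add_zero]
        rw [hstep, hIH, map_smul, LinearMap.smul_apply,
          heE1 (t + k' + 2) (by omega) (by omega), smul_smul,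
          show t + (k' + 1) + 2 = t + k' + 2 + 1 by omega,
          show t + (k' + 1) + 1 = t + k' + 1 + 1 by omega]
        have hfac : (((t + k' + 1 + 1).factorial : ℕ) : ℂ) =
            ((t + k' + 2 : ℕ) : ℂ) * (((t + k' + 1).factorial : ℕ) : ℂ) := by
          rw [Nat.factorial_succ]
          push_cast
          ring
        congr 1
        rw [hfac]
        ring
  intro t k i j htk hi1 hi2 hj1 hj2
  exact main (t + k) t k i j rfl htk hi1 hi2 hj1 hj2
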